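/- arXiv:2005.14134 — 6 statements merged into one kernel-verified Lean document; each statement's English description precedes it below -/
import Mathlib

section
/- The Traced-noun composition rule preserves hyponymy: if n₁, n₂, v₁, v₂ are positive semidefinite real m×m matrices with n₁ ≤ n₂ and v₁ ≤ v₂ in the Löwner order, then tr(n₁)·v₁ ≤ tr(n₂)·v₂ in the Löwner order. -/
open Matrix

lemma psd_smul {m : ℕ} {A : Matrix (Fin m) (Fin m) ℝ} (hA : A.PosSemidef)
    {c : ℝ} (hc : 0 ≤ c) : (c • A).PosSemidef := by
  constructor
  · exact by show (c • A)ᴴ = c • A; rw [Matrix.conjTranspose_smul, hA.1]; simp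
  · intro x
    exact (hA.smul hc).2 x

lemma psd_trace_nonneg {m : ℕ} {A : Matrix (Fin m) (Fin m) ℝ} (hA : A.PosSemidef) :
    0 ≤ A.trace := by
  rw [Matrix.trace]
  apply Finset.sum_nonneg
  intro i _
  exact hA.diag_nonneg

/-- The Traced-noun rule `Compr(n,v) = tr(n) • v` preserves hyponymy. -/
theorem stmt_5 (m : ℕ)
    (n₁ n₂ v₁ v₂ : Matrix (Fin m) (Fin m) ℝ)
    (hn₁ : n₁.PosSemidef) (hn₂ : n₂.PosSemidef)
    (hv₁ : v₁.PosSemidef) (hv₂ : v₂.PosSemidef)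
    (hn : (n₂ - n₁).PosSemidef) (hv : (v₂ - v₁).PosSemidef) :
    (n₂.trace • v₂ - n₁.trace • v₁).PosSemidef := by
  have key : n₂.trace • v₂ - n₁.trace • v₁
      = n₁.trace • (v₂ - v₁) + (n₂ - n₁).trace • v₂ := by
    simp [Matrix.trace_sub, smul_sub, sub_smul]
  rw [key]
  exact (psd_smul hv (psd_trace_nonneg hn₁)).add (psd_smul hv₂ (psd_trace_nonneg hn))
end

section
/- The Diag composition rule preserves hyponymy: if n₁, n₂, v₁, v₂ are positive semidefinite real m×m matrices with n₁ ≤ n₂ and v₁ ≤ v₂ in the Löwner order, then the diagonal matrix whose (i,i) entry is (n₁)_{ii}(v₁)_{ii} is ≤, in the Löwner order, the diagonal matrix whose (i,i) entry is (n₂)_{ii}(v₂)_{ii}; in particular for psd n, v this diagonal matrix diag(n)·diag(v) is psd. -/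
open Matrix

lemma diag_nn {m : ℕ} {A : Matrix (Fin m) (Fin m) ℝ} (h : A.PosSemidef) (i : Fin m) :
    0 ≤ A i i := by
  exact h.diag_nonneg

/-- The Diag rule `Compr(n,v) = diag(n)·diag(v)` preserves hyponymy, and in
particular maps pairs of psd matrices to psd matrices. -/
theorem stmt_7 (m : ℕ)
    (n₁ n₂ v₁ v₂ : Matrix (Fin m) (Fin m) ℝ)
    (hn₁ : n₁.PosSemidef) (hn₂ : n₂.PosSemidef)
    (hv₁ : v₁.PosSemidef) (hv₂ : v₂.PosSemidef)
    (hn : (n₂ - n₁).PosSemidef) (hv : (v₂ - v₁).PosSemidef) :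
    (Matrix.diagonal (fun i => n₂ i i * v₂ i i)
      - Matrix.diagonal (fun i => n₁ i i * v₁ i i)).PosSemidef ∧
    (Matrix.diagonal (fun i => n₁ i i * v₁ i i)).PosSemidef := by
  have h1 : ∀ i, 0 ≤ n₁ i i := diag_nn hn₁
  have h2 : ∀ i, 0 ≤ v₁ i i := diag_nn hv₁
  have h3 : ∀ i, n₁ i i ≤ n₂ i i := fun i => by
    have := diag_nn hn i; simp [Matrix.sub_apply] at this; linarith
  have h4 : ∀ i, v₁ i i ≤ v₂ i i := fun i => by
    have := diag_nn hv i; simp [Matrix.sub_apply] at this; linarith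
  constructor
  · rw [show ((diagonal fun i => n₂ i i * v₂ i i) - diagonal fun i => n₁ i i * v₁ i i) = diagonal fun i => n₂ i i * v₂ i i - n₁ i i * v₁ i i from Matrix.diagonal_sub _ _]
    refine posSemidef_diagonal_iff.mpr fun i => ?_
    have := mul_le_mul (h3 i) (h4 i) (h2 i) ((h1 i).trans (h3 i))
    simpa using sub_nonneg.mpr this
  · exact posSemidef_diagonal_iff.mpr fun i => mul_nonneg (h1 i) (h2 i)
end

section
/- The Summed-noun composition rule preserves hyponymy: for a positive semidefinite real m×m matrix n, the total entry sum Σ_{ij} n_{ij} is nonnegative, and if n₁, n₂, v₁, v₂ are positive semidefinite real m×m matrices with n₁ ≤ n₂ and v₁ ≤ v₂ in the Löwner order, then (Σ_{ij} (n₁)_{ij})·v₁ ≤ (Σ_{ij} (n₂)_{ij})·v₂ in the Löwner order. -/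
open Matrix

/-- The Summed-noun rule `Compr(n,v) = (Σᵢⱼ nᵢⱼ) • v` preserves hyponymy: the
total entry sum of a psd matrix is nonnegative, and the rule is monotone in the
Löwner order on psd arguments. -/
theorem stmt_8 (m : ℕ) :
    (∀ n : Matrix (Fin m) (Fin m) ℝ, n.PosSemidef → 0 ≤ ∑ i, ∑ j, n i j) ∧
    (∀ n₁ n₂ v₁ v₂ : Matrix (Fin m) (Fin m) ℝ,
      n₁.PosSemidef → n₂.PosSemidef → v₁.PosSemidef → v₂.PosSemidef →
      (n₂ - n₁).PosSemidef → (v₂ - v₁).PosSemidef →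
      ((∑ i, ∑ j, n₂ i j) • v₂ - (∑ i, ∑ j, n₁ i j) • v₁).PosSemidef) := by
  have key : ∀ n : Matrix (Fin m) (Fin m) ℝ, n.PosSemidef → 0 ≤ ∑ i, ∑ j, n i j := by
    intro n hn
    have h := (posSemidef_iff_dotProduct_mulVec.mp hn).2 (fun _ => 1)
    simpa [dotProduct, mulVec] using h
  refine ⟨key, fun n₁ n₂ v₁ v₂ h1 h2 hv1 hv2 hnd hvd => ?_⟩
  have hs1 : 0 ≤ ∑ i, ∑ j, n₁ i j := key _ h1
  have hs2 : 0 ≤ ∑ i, ∑ j, (n₂ - n₁) i j := key _ hnd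
  have hs2' : 0 ≤ ∑ i, ∑ j, n₂ i j := key _ h2
  have heq : (∑ i, ∑ j, n₂ i j) • v₂ - (∑ i, ∑ j, n₁ i j) • v₁
      = (∑ i, ∑ j, n₂ i j) • (v₂ - v₁) + (∑ i, ∑ j, (n₂ - n₁) i j) • v₁ := by
    ext i j
    simp [Matrix.sub_apply, Finset.sum_sub_distrib]
    ring
  rw [heq]
  exact (psd_smul hvd hs2').add (psd_smul hv1 hs2)
end

section
/- The Diag-verb composition rule preserves hyponymy: if n₁, n₂, v₁, v₂ are positive semidefinite real m×m matrices with n₁ ≤ n₂ and v₁ ≤ v₂ in the Löwner order, then (Σ_{ij} (n₁)_{ij})·diag(v₁) ≤ (Σ_{ij} (n₂)_{ij})·diag(v₂) in the Löwner order. -/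
open Matrix

lemma sum_entries_nonneg {m : ℕ} {n : Matrix (Fin m) (Fin m) ℝ} (h : n.PosSemidef) :
    0 ≤ ∑ i, ∑ j, n i j := by
  have := h.dotProduct_mulVec_nonneg (fun _ => 1)
  simpa [dotProduct, Matrix.mulVec, Finset.mul_sum] using this

lemma diag_entry_nonneg {m : ℕ} {v : Matrix (Fin m) (Fin m) ℝ} (h : v.PosSemidef) (i : Fin m) :
    0 ≤ v i i := by
  have := h.dotProduct_mulVec_nonneg (Pi.single i 1)
  simpa [dotProduct, Matrix.mulVec, Pi.single_apply] using this

/-- The Diag-verb rule `Compr(n,v) = (Σᵢⱼ nᵢⱼ) • diag(v)` preserves hyponymy. -/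
theorem stmt_9 (m : ℕ)
    (n₁ n₂ v₁ v₂ : Matrix (Fin m) (Fin m) ℝ)
    (hn₁ : n₁.PosSemidef) (hn₂ : n₂.PosSemidef)
    (hv₁ : v₁.PosSemidef) (hv₂ : v₂.PosSemidef)
    (hn : (n₂ - n₁).PosSemidef) (hv : (v₂ - v₁).PosSemidef) :
    ((∑ i, ∑ j, n₂ i j) • Matrix.diagonal (fun i => v₂ i i)
      - (∑ i, ∑ j, n₁ i j) • Matrix.diagonal (fun i => v₁ i i)).PosSemidef := by
  set s₁ := ∑ i, ∑ j, n₁ i j with hs₁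
  set s₂ := ∑ i, ∑ j, n₂ i j with hs₂
  have h1 : 0 ≤ s₁ := sum_entries_nonneg hn₁
  have hdiff : 0 ≤ s₂ - s₁ := by
    have := sum_entries_nonneg hn
    simpa [Matrix.sub_apply, Finset.sum_sub_distrib] using this
  have key : ((∑ i, ∑ j, n₂ i j) • Matrix.diagonal (fun i => v₂ i i)
      - (∑ i, ∑ j, n₁ i j) • Matrix.diagonal (fun i => v₁ i i))
      = Matrix.diagonal (fun i => s₂ * v₂ i i - s₁ * v₁ i i) := by
    rw [← hs₁, ← hs₂, ← Matrix.diagonal_smul, ← Matrix.diagonal_smul, ← Matrix.diagonal_sub]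
    rfl
  rw [key]
  refine Matrix.posSemidef_diagonal_iff.mpr fun i => ?_
  have hvd : v₁ i i ≤ v₂ i i := by
    have := diag_entry_nonneg hv i
    simpa [Matrix.sub_apply] using this
  have h1v : 0 ≤ v₁ i i := diag_entry_nonneg hv₁ i
  nlinarith
end

section
/- Phaser does not preserve hyponymy: there exist positive semidefinite real 2×2 matrices n₁, n₂, v₁, v₂ with n₁ ≤ n₂ and v₁ ≤ v₂ in the Löwner order such that v₁^{1/2} n₁ v₁^{1/2} ≤ v₂^{1/2} n₂ v₂^{1/2} fails (i.e. v₂^{1/2} n₂ v₂^{1/2} − v₁^{1/2} n₁ v₁^{1/2} is not positive semidefinite), where w^{1/2} denotes the unique positive semidefinite square root of a psd matrix w. -/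
open Matrix

namespace Matrix.PosSemidef

open scoped ComplexOrder in
/-- The positive semidefinite square root of a psd matrix, as defined in the older Mathlib
(`Matrix.PosSemidef.sqrt`, since removed). -/
noncomputable def sqrt {n : Type*} {𝕜 : Type*} [Fintype n] [DecidableEq n] [RCLike 𝕜]
    {A : Matrix n n 𝕜} (hA : A.PosSemidef) : Matrix n n 𝕜 :=
  hA.1.eigenvectorUnitary.1 * diagonal ((↑) ∘ (Real.sqrt ∘ hA.1.eigenvalues)) *
    (star hA.1.eigenvectorUnitary : Matrix n n 𝕜)

end Matrix.PosSemidef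

open scoped MatrixOrder ComplexOrder in
lemma Matrix.PosSemidef.eq_sqrt_of_sq_eq {n : Type*} {𝕜 : Type*} [Fintype n] [DecidableEq n]
    [RCLike 𝕜] {A : Matrix n n 𝕜} (hA : A.PosSemidef) (B : Matrix n n 𝕜) {hB : B.PosSemidef}
    (h : A ^ 2 = B) : A = hB.sqrt := by
  have e : hB.sqrt = cfc Real.sqrt B := by
    rw [hB.1.cfc_eq]
    rfl
  rw [e, ← cfcₙ_eq_cfc (f := Real.sqrt) (a := B) Real.continuous_sqrt.continuousOn Real.sqrt_zero,
    ← CFC.sqrt_eq_real_sqrt B hB.nonneg]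
  exact (CFC.sqrt_unique (by rw [← pow_two, h]) hA.nonneg).symm

lemma psd2 (a b c : ℝ) (ha : 0 ≤ a) (hc : 0 ≤ c) (h : b ^ 2 ≤ a * c) :
    (!![a, b; b, c] : Matrix (Fin 2) (Fin 2) ℝ).PosSemidef := by
  rw [Matrix.posSemidef_iff_dotProduct_mulVec]
  constructor
  · ext i j
    fin_cases i <;> fin_cases j <;> simp [Matrix.conjTranspose_apply]
  · intro x
    simp [dotProduct, Matrix.mulVec, Fin.sum_univ_two]
    rcases ha.eq_or_lt with h0 | h0
    · have hb : b = 0 := by nlinarith [sq_nonneg b]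
      subst hb
      simp [← h0]
      nlinarith [mul_nonneg hc (sq_nonneg (x 1))]
    · nlinarith [sq_nonneg (a * x 0 + b * x 1),
        mul_nonneg (sub_nonneg.2 h) (sq_nonneg (x 1)), h0]

/-- Phaser does not preserve hyponymy: there are psd 2×2 matrices with
`n₁ ≤ n₂` and `v₁ ≤ v₂` in the Löwner order, but
`v₂^{1/2} n₂ v₂^{1/2} − v₁^{1/2} n₁ v₁^{1/2}` is not psd. -/
theorem stmt_14 :
    ∃ (n₁ n₂ v₁ v₂ : Matrix (Fin 2) (Fin 2) ℝ)
      (_hn₁ : n₁.PosSemidef) (_hn₂ : n₂.PosSemidef)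
      (hv₁ : v₁.PosSemidef) (hv₂ : v₂.PosSemidef),
      (n₂ - n₁).PosSemidef ∧ (v₂ - v₁).PosSemidef ∧
      ¬ (hv₂.sqrt * n₂ * hv₂.sqrt - hv₁.sqrt * n₁ * hv₁.sqrt).PosSemidef := by
  refine ⟨!![1,0;0,0], !![1,0;0,0], !![1,0;0,0], !![5,4;4,5],
    psd2 1 0 0 (by norm_num) (by norm_num) (by norm_num),
    psd2 1 0 0 (by norm_num) (by norm_num) (by norm_num),
    psd2 1 0 0 (by norm_num) (by norm_num) (by norm_num),
    psd2 5 4 5 (by norm_num) (by norm_num) (by norm_num), ?_, ?_, ?_⟩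
  · have : (!![1,0;0,0] - !![1,0;0,0] : Matrix (Fin 2) (Fin 2) ℝ) = !![0,0;0,0] := by
      ext i j; fin_cases i <;> fin_cases j <;> simp <;> norm_num
    rw [this]
    exact psd2 0 0 0 le_rfl le_rfl (by norm_num)
  · have : (!![5,4;4,5] - !![1,0;0,0] : Matrix (Fin 2) (Fin 2) ℝ) = !![4,4;4,5] := by
      ext i j; fin_cases i <;> fin_cases j <;> simp <;> norm_num
    rw [this]
    exact psd2 4 4 5 (by norm_num) (by norm_num) (by norm_num)
  · have h1 : (psd2 1 0 0 (by norm_num) (by norm_num) (by norm_num) :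
        (!![1,0;0,0] : Matrix (Fin 2) (Fin 2) ℝ).PosSemidef).sqrt = !![1,0;0,0] := by
      refine ((psd2 1 0 0 (by norm_num) (by norm_num) (by norm_num)).eq_sqrt_of_sq_eq _ ?_).symm
      rw [pow_two]
      ext i j; fin_cases i <;> fin_cases j <;>
        simp [Matrix.mul_apply, Fin.sum_univ_two]
    have h2 : (psd2 5 4 5 (by norm_num) (by norm_num) (by norm_num) :
        (!![5,4;4,5] : Matrix (Fin 2) (Fin 2) ℝ).PosSemidef).sqrt = !![2,1;1,2] := by
      refine ((psd2 2 1 2 (by norm_num) (by norm_num) (by norm_num)).eq_sqrt_of_sq_eq _ ?_).symm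
      rw [pow_two]
      ext i j; fin_cases i <;> fin_cases j <;>
        simp [Matrix.mul_apply, Fin.sum_univ_two] <;> norm_num
    rw [h1, h2]
    intro h
    have := (Matrix.posSemidef_iff_dotProduct_mulVec.1 h).2 ![1, -2]
    simp [dotProduct, Matrix.mulVec, Fin.sum_univ_two, Matrix.mul_apply] at this
    norm_num at this
end

section
/- Choi–Kraus theorem (real case): let φ : M_m(ℝ) → M_m(ℝ) be a linear map and define its Choi matrix C(φ) = Σ_{i,j} φ(E_{ij}) ⊗ E_{ij} ∈ M_{m²}(ℝ), where E_{ij} is the matrix with a 1 in entry (i,j) and 0 elsewhere and ⊗ is the Kronecker product. Then C(φ) is positive semidefinite if and only if there exists a finite family of real m×m matrices K₁,…,K_r such that φ(a) = Σ_{l=1}^r K_l a K_lᵀ for all a ∈ M_m(ℝ). -/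
open Matrix Kronecker

private lemma choi_apply {m : ℕ}
    (φ : Matrix (Fin m) (Fin m) ℝ →ₗ[ℝ] Matrix (Fin m) (Fin m) ℝ)
    (p i q j : Fin m) :
    (∑ i', ∑ j', φ (Matrix.single i' j' 1) ⊗ₖ Matrix.single i' j' 1)
        (p, i) (q, j) = φ (Matrix.single i j 1) p q := by
  simp [Matrix.sum_apply, Matrix.single, ite_and, mul_ite]

private lemma kraus_entry {m : ℕ} (K : Matrix (Fin m) (Fin m) ℝ) (i j p q : Fin m) :
    (K * Matrix.single i j 1 * Kᵀ : Matrix (Fin m) (Fin m) ℝ) p q = K p i * K q j := by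
  simp [Matrix.mul_apply, Matrix.single, ite_and, mul_ite,
    Finset.sum_mul, mul_comm]

/-- Choi–Kraus theorem (real case): a linear map `φ : M_m(ℝ) → M_m(ℝ)` has a
positive semidefinite Choi matrix `C(φ) = Σᵢⱼ φ(Eᵢⱼ) ⊗ Eᵢⱼ` if and only if it
admits a Kraus decomposition `φ(a) = Σₗ Kₗ a Kₗᵀ`. -/
theorem stmt_16 (m : ℕ)
    (φ : Matrix (Fin m) (Fin m) ℝ →ₗ[ℝ] Matrix (Fin m) (Fin m) ℝ) :
    (∑ i, ∑ j, φ (Matrix.single i j 1) ⊗ₖ Matrix.single i j 1).PosSemidef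
      ↔ ∃ (r : ℕ) (K : Fin r → Matrix (Fin m) (Fin m) ℝ),
          ∀ a : Matrix (Fin m) (Fin m) ℝ, φ a = ∑ l, K l * a * (K l)ᵀ := by
  constructor
  · intro h
    obtain ⟨B, hB⟩ : ∃ B : Matrix (Fin m × Fin m) (Fin m × Fin m) ℝ,
        (∑ i, ∑ j, φ (Matrix.single i j 1) ⊗ₖ Matrix.single i j 1) = Bᴴ * B := by
      open MatrixOrder in exact CStarAlgebra.nonneg_iff_eq_star_mul_self.mp h.nonneg
    set K : Fin (m * m) → Matrix (Fin m) (Fin m) ℝ :=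
      fun l => Matrix.of fun p i => B (finProdFinEquiv.symm l) (p, i) with hKdef
    refine ⟨m * m, K, ?_⟩
    -- the linear map a ↦ ∑ l, K l * a * (K l)ᵀ
    set ψ : Matrix (Fin m) (Fin m) ℝ →ₗ[ℝ] Matrix (Fin m) (Fin m) ℝ :=
      { toFun := fun a => ∑ l, K l * a * (K l)ᵀ
        map_add' := by
          intro x y
          simp [Matrix.mul_add, Matrix.add_mul, Finset.sum_add_distrib]
        map_smul' := by
          intro c x
          simp [Matrix.mul_smul, Matrix.smul_mul, Finset.smul_sum] } with hψdef
    have hbasis : ∀ i j : Fin m,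
        φ (Matrix.single i j 1) = ψ (Matrix.single i j 1) := by
      intro i j
      ext p q
      have h1 := choi_apply φ p i q j
      rw [hB] at h1
      rw [← h1]
      simp only [hψdef, LinearMap.coe_mk, AddHom.coe_mk, Matrix.sum_apply, kraus_entry, Matrix.of_apply]
      rw [Matrix.mul_apply]
      rw [← Equiv.sum_comp finProdFinEquiv.symm
        (fun l => Bᴴ (p, i) l * B l (q, j))]
      simp [hKdef, Matrix.conjTranspose_apply]
    have hφψ : φ = ψ := by
      apply Module.Basis.ext (Matrix.stdBasis ℝ (Fin m) (Fin m))
      rintro ⟨i, j⟩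
      rw [Matrix.stdBasis_eq_single]
      exact hbasis i j
    intro a
    rw [hφψ]
    rfl
  · rintro ⟨r, K, hK⟩
    set B : Matrix (Fin r) (Fin m × Fin m) ℝ :=
      Matrix.of fun l pi => K l pi.1 pi.2 with hBdef
    have hC : (∑ i, ∑ j, φ (Matrix.single i j 1) ⊗ₖ Matrix.single i j 1)
        = Bᴴ * B := by
      ext ⟨p, i⟩ ⟨q, j⟩
      rw [choi_apply φ p i q j, hK, Matrix.mul_apply]
      simp [hBdef, Matrix.sum_apply, kraus_entry, Matrix.conjTranspose_apply]
    rw [hC]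
    exact Matrix.posSemidef_conjTranspose_mul_self B
end
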